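/- Let (M_ℓ)_{ℓ≥0} be the marked sets of an adaptive algorithm with meshes satisfying |𝒯_ℓ| − |𝒯_0| ≤ C_mesh ∑_{k=0}^{ℓ−1} |M_k| (mesh-closure estimate), and suppose |M_k| ≤ C_M B^{1/s} η_k^{−1/s} for all k where B ≥ 0, s > 0 and (η_k) satisfies inverse summability ∑_{k=0}^{ℓ−1} η_k^{−1/s} ≤ C(s) η_ℓ^{−1/s}. Then |𝒯_ℓ| − |𝒯_0| ≤ C_mesh C_M C(s) B^{1/s} η_ℓ^{−1/s}, and consequently η_ℓ (|𝒯_ℓ| − |𝒯_0| + 1)^s ≤ C' (B + η_0 · const) for a constant C' depending only on C_mesh, C_M, C(s), s. -/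
import Mathlib


/-- `(a+b)^s ≤ 2^s (a^s + b^s)` for nonnegative reals. -/
lemma stmt_15_aux {a b s : ℝ} (ha : 0 ≤ a) (hb : 0 ≤ b) (hs : 0 < s) :
    (a + b) ^ s ≤ 2 ^ s * (a ^ s + b ^ s) := by
  rcases le_total a b with h | h
  · calc (a + b) ^ s ≤ (2 * b) ^ s := by
          apply Real.rpow_le_rpow (by linarith) (by linarith) hs.le
        _ = 2 ^ s * b ^ s := Real.mul_rpow (by norm_num) hb
        _ ≤ 2 ^ s * (a ^ s + b ^ s) := by
          have h1 : 0 ≤ a ^ s := Real.rpow_nonneg ha s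
          have h2 : (0:ℝ) < 2 ^ s := Real.rpow_pos_of_pos (by norm_num) s
          nlinarith
  · calc (a + b) ^ s ≤ (2 * a) ^ s := by
          apply Real.rpow_le_rpow (by linarith) (by linarith) hs.le
        _ = 2 ^ s * a ^ s := Real.mul_rpow (by norm_num) ha
        _ ≤ 2 ^ s * (a ^ s + b ^ s) := by
          have h1 : 0 ≤ b ^ s := Real.rpow_nonneg hb s
          have h2 : (0:ℝ) < 2 ^ s := Real.rpow_pos_of_pos (by norm_num) s
          nlinarith

/-- `x^s ≤ |x|^s` for any real `x` and `s`. -/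
lemma stmt_15_aux2 {x s : ℝ} : x ^ s ≤ |x| ^ s := by
  rcases lt_trichotomy x 0 with hx | hx | hx
  · rw [Real.rpow_def_of_neg hx, abs_of_neg hx,
      Real.rpow_def_of_pos (by linarith), Real.log_neg_eq_log]
    have hc : Real.cos (s * Real.pi) ≤ 1 := Real.cos_le_one _
    have he : (0:ℝ) < Real.exp (Real.log x * s) := Real.exp_pos _
    nlinarith
  · simp [hx]
  · rw [abs_of_pos hx]

/-- Final assembly of the quasi-optimality proof: the mesh-closure estimate, the
bound on the number of marked elements and inverse summability yield
`|𝒯_ℓ| − |𝒯_0| ≤ C_mesh C_M C(s) B^{1/s} η_ℓ^{-1/s}` and consequently the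
optimal rate estimate `η_ℓ (|𝒯_ℓ| − |𝒯_0| + 1)^s ≤ C' (B + η_0)`. -/
theorem stmt_15 (card𝒯 Mcard : ℕ → ℕ) (η : ℕ → ℝ)
    (Cmesh CM Cs B s : ℝ)
    (hη : ∀ ℓ, 0 < η ℓ) (hCmesh : 0 < Cmesh) (hCM : 0 < CM) (hCs : 0 < Cs)
    (hB : 0 ≤ B) (hs : 0 < s)
    (hclosure : ∀ ℓ, (card𝒯 ℓ : ℝ) - card𝒯 0 ≤ Cmesh * ∑ k ∈ Finset.range ℓ, (Mcard k : ℝ))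
    (hmark : ∀ k, (Mcard k : ℝ) ≤ CM * B ^ (1 / s) * η k ^ (-(1 / s)))
    (hinvsum : ∀ ℓ, ∑ k ∈ Finset.range ℓ, η k ^ (-(1 / s)) ≤ Cs * η ℓ ^ (-(1 / s))) :
    (∀ ℓ, (card𝒯 ℓ : ℝ) - card𝒯 0 ≤ Cmesh * CM * Cs * B ^ (1 / s) * η ℓ ^ (-(1 / s))) ∧
      ∃ C' : ℝ, 0 < C' ∧
        ∀ ℓ, η ℓ * ((card𝒯 ℓ : ℝ) - card𝒯 0 + 1) ^ s ≤ C' * (B + η 0) := by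
  have hBs : 0 ≤ B ^ (1 / s) := Real.rpow_nonneg hB _
  have hηs : ∀ k, 0 < η k ^ (-(1 / s)) := fun k => Real.rpow_pos_of_pos (hη k) _
  -- Part 1
  have part1 : ∀ ℓ, (card𝒯 ℓ : ℝ) - card𝒯 0 ≤
      Cmesh * CM * Cs * B ^ (1 / s) * η ℓ ^ (-(1 / s)) := by
    intro ℓ
    calc (card𝒯 ℓ : ℝ) - card𝒯 0 ≤ Cmesh * ∑ k ∈ Finset.range ℓ, (Mcard k : ℝ) := hclosure ℓ
      _ ≤ Cmesh * ∑ k ∈ Finset.range ℓ, CM * B ^ (1 / s) * η k ^ (-(1 / s)) := by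
          apply mul_le_mul_of_nonneg_left (Finset.sum_le_sum fun k _ => hmark k) hCmesh.le
      _ = Cmesh * (CM * B ^ (1 / s) * ∑ k ∈ Finset.range ℓ, η k ^ (-(1 / s))) := by
          simp only [Finset.mul_sum]
      _ ≤ Cmesh * (CM * B ^ (1 / s) * (Cs * η ℓ ^ (-(1 / s)))) := by
          apply mul_le_mul_of_nonneg_left _ hCmesh.le
          exact mul_le_mul_of_nonneg_left (hinvsum ℓ) (by positivity)
      _ = Cmesh * CM * Cs * B ^ (1 / s) * η ℓ ^ (-(1 / s)) := by ring
  refine ⟨part1, ?_⟩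
  set C : ℝ := Cmesh * CM * Cs with hCdef
  have hC : 0 < C := by positivity
  -- η ℓ ≤ (Cs^s + 1) * η 0 for all ℓ
  have hetabound : ∀ ℓ, η ℓ ≤ (Cs ^ s + 1) * η 0 := by
    intro ℓ
    have hCss : 0 < Cs ^ s := Real.rpow_pos_of_pos hCs s
    rcases Nat.eq_zero_or_pos ℓ with h0 | hpos
    · subst h0; nlinarith [hη 0]
    · have h1 : η 0 ^ (-(1 / s)) ≤ Cs * η ℓ ^ (-(1 / s)) := by
        refine le_trans ?_ (hinvsum ℓ)
        exact Finset.single_le_sum (fun k _ => (hηs k).le) (Finset.mem_range.2 hpos)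
      -- raise to power s
      have h2 : (η 0 ^ (-(1 / s))) ^ s ≤ (Cs * η ℓ ^ (-(1 / s))) ^ s :=
        Real.rpow_le_rpow (hηs 0).le h1 hs.le
      have e0 : (η 0 ^ (-(1 / s))) ^ s = (η 0)⁻¹ := by
        rw [← Real.rpow_mul (hη 0).le]
        rw [show -(1 / s) * s = -1 by field_simp]
        exact Real.rpow_neg_one _
      have eℓ : (Cs * η ℓ ^ (-(1 / s))) ^ s = Cs ^ s * (η ℓ)⁻¹ := by
        rw [Real.mul_rpow hCs.le (hηs ℓ).le, ← Real.rpow_mul (hη ℓ).le]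
        rw [show -(1 / s) * s = -1 by field_simp]
        rw [Real.rpow_neg_one]
      rw [e0, eℓ] at h2
      have h3 : η ℓ ≤ Cs ^ s * η 0 := by
        have h4 := mul_le_mul_of_nonneg_right h2 (mul_nonneg (hη 0).le (hη ℓ).le)
        calc η ℓ = (η 0)⁻¹ * (η 0 * η ℓ) := by
              rw [← mul_assoc, inv_mul_cancel₀ (hη 0).ne', one_mul]
          _ ≤ Cs ^ s * (η ℓ)⁻¹ * (η 0 * η ℓ) := h4
          _ = Cs ^ s * ((η ℓ)⁻¹ * η ℓ) * η 0 := by ring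
          _ = Cs ^ s * η 0 := by rw [inv_mul_cancel₀ (hη ℓ).ne', mul_one]
      nlinarith [hη 0]
  -- the constant
  have h2s : (0:ℝ) < 2 ^ s := Real.rpow_pos_of_pos (by norm_num) s
  have hc1 : (0:ℝ) < ((card𝒯 0 : ℝ) + 1) ^ s :=
    Real.rpow_pos_of_pos (by positivity) s
  have hCss : (0:ℝ) < Cs ^ s := Real.rpow_pos_of_pos hCs s
  have hCp : (0:ℝ) < C ^ s := Real.rpow_pos_of_pos hC s
  refine ⟨2 ^ s * ((Cs ^ s + 1) * ((card𝒯 0 : ℝ) + 1) ^ s + C ^ s), mul_pos h2s (by nlinarith [mul_pos hCss hc1]), ?_⟩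
  intro ℓ
  set X : ℝ := (card𝒯 ℓ : ℝ) - card𝒯 0 with hXdef
  set K : ℝ := C * B ^ (1 / s) * η ℓ ^ (-(1 / s)) with hKdef
  have hK : 0 ≤ K := mul_nonneg (mul_nonneg hC.le hBs) (hηs ℓ).le
  have hXK : X ≤ K := part1 ℓ
  -- |X| + 1 ≤ (card𝒯 0 + 1) + K
  have habs : |X| + 1 ≤ ((card𝒯 0 : ℝ) + 1) + K := by
    rcases abs_cases X with ⟨h, _⟩ | ⟨h, _⟩
    · rw [h]; have : (0:ℝ) ≤ card𝒯 0 := Nat.cast_nonneg _; linarith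
    · rw [h]; have : (0:ℝ) ≤ card𝒯 ℓ := Nat.cast_nonneg _; linarith
  -- (X+1)^s ≤ (|X|+1)^s
  have step1 : (X + 1) ^ s ≤ (|X| + 1) ^ s := by
    calc (X + 1) ^ s ≤ |X + 1| ^ s := stmt_15_aux2
      _ ≤ (|X| + 1) ^ s := by
          apply Real.rpow_le_rpow (abs_nonneg _) _ hs.le
          calc |X + 1| ≤ |X| + |(1:ℝ)| := abs_add_le _ _
            _ = |X| + 1 := by rw [abs_one]
  have step2 : (|X| + 1) ^ s ≤ (((card𝒯 0 : ℝ) + 1) + K) ^ s :=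
    Real.rpow_le_rpow (by positivity) habs hs.le
  have step3 : (((card𝒯 0 : ℝ) + 1) + K) ^ s ≤ 2 ^ s * (((card𝒯 0 : ℝ) + 1) ^ s + K ^ s) :=
    stmt_15_aux (by positivity) hK hs
  -- η ℓ * K^s = C^s * B
  have hKs : η ℓ * K ^ s = C ^ s * B := by
    have e1 : (B ^ (1 / s)) ^ s = B := by
      rw [← Real.rpow_mul hB, one_div, inv_mul_cancel₀ hs.ne', Real.rpow_one]
    have e2 : (η ℓ ^ (-(1 / s))) ^ s = (η ℓ)⁻¹ := by
      rw [← Real.rpow_mul (hη ℓ).le, show -(1 / s) * s = -1 by field_simp,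
        Real.rpow_neg_one]
    rw [hKdef, Real.mul_rpow (mul_nonneg hC.le hBs) (hηs ℓ).le,
      Real.mul_rpow hC.le hBs, e1, e2]
    calc η ℓ * (C ^ s * B * (η ℓ)⁻¹) = C ^ s * B * ((η ℓ)⁻¹ * η ℓ) := by ring
      _ = C ^ s * B := by rw [inv_mul_cancel₀ (hη ℓ).ne', mul_one]
  calc η ℓ * (X + 1) ^ s
      ≤ η ℓ * (2 ^ s * (((card𝒯 0 : ℝ) + 1) ^ s + K ^ s)) := by
        apply mul_le_mul_of_nonneg_left _ (hη ℓ).le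
        exact le_trans step1 (le_trans step2 step3)
    _ = 2 ^ s * (η ℓ * ((card𝒯 0 : ℝ) + 1) ^ s + η ℓ * K ^ s) := by ring
    _ ≤ 2 ^ s * (((Cs ^ s + 1) * η 0) * ((card𝒯 0 : ℝ) + 1) ^ s + C ^ s * B) := by
        rw [hKs]
        apply mul_le_mul_of_nonneg_left _ h2s.le
        have := hetabound ℓ
        nlinarith
    _ ≤ 2 ^ s * ((Cs ^ s + 1) * ((card𝒯 0 : ℝ) + 1) ^ s + C ^ s) * (B + η 0) := by
        have hη0 := hη 0
        have t1 : 0 ≤ 2 ^ s * ((Cs ^ s + 1) * ((card𝒯 0 : ℝ) + 1) ^ s) * B :=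
          mul_nonneg (mul_nonneg h2s.le (mul_nonneg (by nlinarith) hc1.le)) hB
        have t2 : 0 ≤ 2 ^ s * C ^ s * η 0 :=
          mul_nonneg (mul_nonneg h2s.le hCp.le) hη0.le
        nlinarith [t1, t2]
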